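/- The conjugate state vector ⟨\Psi_M^{(k)}| = ⟨0|\phi_k C(v_2)···C(v_N) expands as \sum_\lambda \psi_\lambda ⟨\lambda|, where the sum runs exactly over partitions \lambda with (k) ⊆ \lambda ⊆ (M^{N-1}, k) — that is, \lambda has at most N parts, first part at most M, last (N-th) part at most k, and at least one part ≥ k (equivalently \lambda_1 ≥ k when interpreted with \lambda ⊇ (k)). -/

import Mathlib

open Finset

noncomputable section

/-- The Fock space of the phase model on `M+1` sites. -/
abbrev FockM (M : ℕ) := (Fin (M + 1) → ℕ) →₀ ℂ

/-- The local annihilation operator `φ_j`. -/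
def phiOp (M : ℕ) (j : Fin (M + 1)) : Module.End ℂ (FockM M) :=
  Finsupp.lsum ℂ fun c =>
    if c j = 0 then 0 else Finsupp.lsingle (Function.update c j (c j - 1))

/-- The local creation operator `φ_j^†`. -/
def phiDagOp (M : ℕ) (j : Fin (M + 1)) : Module.End ℂ (FockM M) :=
  Finsupp.lmapDomain ℂ ℂ fun c => Function.update c j (c j + 1)

/-- The local `L`-operator of the phase model, `L_j(u) = [[1/u, φ_j^†], [φ_j, u]]`. -/
def Lop (M : ℕ) (j : Fin (M + 1)) (u : ℂ) :
    Matrix (Fin 2) (Fin 2) (Module.End ℂ (FockM M)) :=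
  !![u⁻¹ • 1, phiDagOp M j; phiOp M j, u • 1]

/-- The monodromy matrix `T(u) = L_M(u) L_{M-1}(u) ⋯ L_0(u)`. -/
def Tmon (M : ℕ) (u : ℂ) : Matrix (Fin 2) (Fin 2) (Module.End ℂ (FockM M)) :=
  (List.ofFn fun i : Fin (M + 1) => Lop M (Fin.rev i) u).prod

/-- The annihilation operator `C(u)`. -/
def Cop (M : ℕ) (u : ℂ) : Module.End ℂ (FockM M) := Tmon M u 1 0

/-- The conjugate vacuum `⟨0|`. -/
def covac (M : ℕ) : FockM M →ₗ[ℂ] ℂ := Finsupp.lapply (fun _ => 0)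

/-- The occupation-number configuration of the partition `λ`:
`n_k = #{i | λ_i = k}`, i.e. `λ = (M^{n_M}, …, 1^{n_1}, 0^{n_0})`. -/
def configOf {N : ℕ} (M : ℕ) (lam : Fin N → ℕ) : Fin (M + 1) → ℕ :=
  fun k => (Finset.univ.filter fun i => lam i = (k : ℕ)).card

/-- The conjugate basis state `⟨λ|`, as a linear functional. -/
def colam {N : ℕ} (M : ℕ) (lam : Fin N → ℕ) : FockM M →ₗ[ℂ] ℂ :=
  Finsupp.lapply (configOf M lam)

end

instance {N M : ℕ} : DecidablePred (Antitone : (Fin N → Fin M) → Prop) := fun f =>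
  decidable_of_iff (∀ a b, a ≤ b → f b ≤ f a) Iff.rfl


namespace ConjAux

/-! ### Generic list product lemma -/

def descProd {α : Type*} [Monoid α] (g : ℕ → α) : ℕ → α
  | 0 => 1
  | (m+1) => g m * descProd g m

lemma prod_ofFn_desc {α : Type*} [Monoid α] (g : ℕ → α) :
    ∀ n, (List.ofFn fun i : Fin n => g (n - 1 - (i : ℕ))).prod = descProd g n := by
  intro n
  induction n with
  | zero => simp [descProd]
  | succ n ih =>
    have hd : descProd g (n+1) = g n * descProd g n := rfl
    rw [hd, ← ih, List.ofFn_succ, List.prod_cons]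
    congr 3
    funext i
    congr 1
    simp only [Fin.val_succ]
    omega

/-! ### Sums and updates -/

variable {M k : ℕ}

def tot {M : ℕ} (c : Fin (M + 1) → ℕ) : ℕ := ∑ j, c j

def lo {M : ℕ} (k : ℕ) (c : Fin (M + 1) → ℕ) : ℕ :=
  ∑ j ∈ Finset.univ.filter (fun j : Fin (M + 1) => (j : ℕ) ≤ k), c j

def Fcnt {M : ℕ} (c : Fin (M + 1) → ℕ) (j : ℕ) : ℕ :=
  ∑ t ∈ Finset.univ.filter (fun t : Fin (M + 1) => j ≤ (t : ℕ)), c t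

def hi {M : ℕ} (k : ℕ) (c : Fin (M + 1) → ℕ) : ℕ := Fcnt c k

lemma sum_update (s : Finset (Fin (M + 1))) (c : Fin (M + 1) → ℕ) (j : Fin (M + 1)) (v : ℕ) :
    (∑ t ∈ s, Function.update c j v t) + (if j ∈ s then c j else 0)
      = (∑ t ∈ s, c t) + (if j ∈ s then v else 0) := by
  by_cases h : j ∈ s
  · rw [if_pos h, if_pos h, Finset.sum_update_of_mem h, ← Finset.add_sum_erase _ c h,
      Finset.sdiff_singleton_eq_erase]
    omega
  · rw [if_neg h, if_neg h, Finset.sum_update_of_notMem h]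

lemma tot_update (c : Fin (M + 1) → ℕ) (j : Fin (M + 1)) (v : ℕ) :
    tot (Function.update c j v) + c j = tot c + v := by
  have := sum_update (Finset.univ) c j v
  simpa [tot] using this

lemma lo_update (c : Fin (M + 1) → ℕ) (j : Fin (M + 1)) (v : ℕ) :
    lo k (Function.update c j v) + (if (j : ℕ) ≤ k then c j else 0)
      = lo k c + (if (j : ℕ) ≤ k then v else 0) := by
  have := sum_update (Finset.univ.filter (fun t : Fin (M + 1) => (t : ℕ) ≤ k)) c j v
  simpa [lo, Finset.mem_filter] using this

lemma hi_update (c : Fin (M + 1) → ℕ) (j : Fin (M + 1)) (v : ℕ) :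
    hi k (Function.update c j v) + (if k ≤ (j : ℕ) then c j else 0)
      = hi k c + (if k ≤ (j : ℕ) then v else 0) := by
  have := sum_update (Finset.univ.filter (fun t : Fin (M + 1) => k ≤ (t : ℕ))) c j v
  simpa [hi, Fcnt, Finset.mem_filter] using this

lemma Fcnt_anti (c : Fin (M + 1) → ℕ) {j j' : ℕ} (h : j ≤ j') : Fcnt c j' ≤ Fcnt c j := by
  apply Finset.sum_le_sum_of_subset
  intro t ht
  simp only [Finset.mem_filter, Finset.mem_univ, true_and] at ht ⊢
  omega

lemma Fcnt_zero (c : Fin (M + 1) → ℕ) : Fcnt c 0 = tot c := by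
  simp [Fcnt, tot]

lemma Fcnt_top (c : Fin (M + 1) → ℕ) {j : ℕ} (h : M < j) : Fcnt c j = 0 := by
  rw [Fcnt, Finset.sum_eq_zero_iff.mpr]
  intro t ht
  simp only [Finset.mem_filter, Finset.mem_univ, true_and] at ht
  exact absurd ht (by omega)

lemma Fcnt_succ (c : Fin (M + 1) → ℕ) (j : Fin (M + 1)) :
    Fcnt c (j : ℕ) = c j + Fcnt c ((j : ℕ) + 1) := by
  rw [Fcnt, Fcnt]
  have hins : (Finset.univ.filter fun t : Fin (M + 1) => (j : ℕ) ≤ (t : ℕ))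
      = insert j (Finset.univ.filter fun t : Fin (M + 1) => (j : ℕ) + 1 ≤ (t : ℕ)) := by
    ext t
    simp only [Finset.mem_filter, Finset.mem_univ, true_and, Finset.mem_insert]
    constructor
    · intro h
      rcases Nat.eq_or_lt_of_le h with h' | h'
      · left; exact (Fin.ext h'.symm)
      · right; omega
    · rintro (rfl | h) <;> omega
  rw [hins, Finset.sum_insert (by simp)]

lemma lo_add_Fcnt (c : Fin (M + 1) → ℕ) : lo k c + Fcnt c (k + 1) = tot c := by
  rw [lo, Fcnt, tot]
  rw [← Finset.sum_filter_add_sum_filter_not Finset.univ (fun t : Fin (M + 1) => (t : ℕ) ≤ k) c]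
  congr 1
  apply Finset.sum_congr _ (fun _ _ => rfl)
  ext t
  simp only [Finset.mem_filter, Finset.mem_univ, true_and]
  omega


/-! ### Support submodules on Fock space -/

open Finsupp in
noncomputable def Supp (M : ℕ) (P : (Fin (M + 1) → ℕ) → Prop) : Submodule ℂ (FockM M) :=
  Finsupp.supported ℂ ℂ {d | P d}

lemma mem_Supp {M : ℕ} {P : (Fin (M + 1) → ℕ) → Prop} {x : FockM M} :
    x ∈ Supp M P ↔ ∀ d, x d ≠ 0 → P d := by
  rw [Supp, Finsupp.mem_supported']
  constructor
  · intro h d hd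
    by_contra hP
    exact hd (h d hP)
  · intro h d hd
    by_contra h0
    exact hd (h d h0)

lemma single_mem_Supp {M : ℕ} {P : (Fin (M + 1) → ℕ) → Prop} {d : Fin (M + 1) → ℕ}
    (hd : P d) (a : ℂ) : Finsupp.single d a ∈ Supp M P :=
  Finsupp.single_mem_supported ℂ a hd

lemma Supp_mono {M : ℕ} {P Q : (Fin (M + 1) → ℕ) → Prop} (h : ∀ d, P d → Q d) {x : FockM M}
    (hx : x ∈ Supp M P) : x ∈ Supp M Q :=
  mem_Supp.mpr (fun d hd => h d (mem_Supp.mp hx d hd))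

lemma map_Supp {M : ℕ} {P Q : (Fin (M + 1) → ℕ) → Prop} (A : Module.End ℂ (FockM M))
    (h : ∀ c, P c → A (Finsupp.single c 1) ∈ Supp M Q) :
    ∀ x ∈ Supp M P, A x ∈ Supp M Q := by
  intro x hx
  rw [Supp, Finsupp.supported_eq_span_single] at hx
  induction hx using Submodule.span_induction with
  | mem y hy => obtain ⟨c, hc, rfl⟩ := hy; exact h c hc
  | zero => rw [map_zero]; exact zero_mem _
  | add y z _ _ hy hz => rw [map_add]; exact add_mem hy hz
  | smul r y _ hy => rw [map_smul]; exact Submodule.smul_mem _ r hy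

/-! ### Operators on single basis vectors -/

lemma phiOp_single {M : ℕ} (j : Fin (M + 1)) (c : Fin (M + 1) → ℕ) (a : ℂ) :
    phiOp M j (Finsupp.single c a)
      = if c j = 0 then 0 else Finsupp.single (Function.update c j (c j - 1)) a := by
  rw [phiOp, Finsupp.lsum_single]
  by_cases h : c j = 0
  · simp [h]
  · simp [h, Finsupp.lsingle_apply]

lemma phiDagOp_single {M : ℕ} (j : Fin (M + 1)) (c : Fin (M + 1) → ℕ) (a : ℂ) :
    phiDagOp M j (Finsupp.single c a)
      = Finsupp.single (Function.update c j (c j + 1)) a := by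
  rw [phiDagOp, Finsupp.lmapDomain_apply, Finsupp.mapDomain_single]

lemma Lop00 {M : ℕ} (j : Fin (M + 1)) (u : ℂ) : Lop M j u 0 0 = u⁻¹ • 1 := by simp [Lop]
lemma Lop01 {M : ℕ} (j : Fin (M + 1)) (u : ℂ) : Lop M j u 0 1 = phiDagOp M j := by simp [Lop]
lemma Lop10 {M : ℕ} (j : Fin (M + 1)) (u : ℂ) : Lop M j u 1 0 = phiOp M j := by simp [Lop]
lemma Lop11 {M : ℕ} (j : Fin (M + 1)) (u : ℂ) : Lop M j u 1 1 = u • 1 := by simp [Lop]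

/-! ### Partial monodromy products -/

noncomputable def Tpart (M : ℕ) (u : ℂ) : ℕ → Matrix (Fin 2) (Fin 2) (Module.End ℂ (FockM M)) :=
  descProd (fun m => if h : m < M + 1 then Lop M ⟨m, h⟩ u else 1)

lemma Tmon_eq_Tpart {M : ℕ} (u : ℂ) : Tmon M u = Tpart M u (M + 1) := by
  rw [Tmon, Tpart, ← prod_ofFn_desc]
  congr 1
  congr 1
  funext i
  have h1 : (M + 1 - 1 - (i : ℕ)) < M + 1 := by omega
  rw [dif_pos h1]
  have h2 : Fin.rev i = (⟨M + 1 - 1 - (i : ℕ), h1⟩ : Fin (M + 1)) := by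
    ext
    simp [Fin.val_rev]
  rw [h2]

/-! ### The invariants -/

def Q0 (M k m : ℕ) (c d : Fin (M + 1) → ℕ) : Prop :=
  tot d = tot c ∧ lo k d ≤ lo k c ∧ hi k d ≤ hi k c + (if k < m then 1 else 0)
    ∧ (m ≤ k + 1 → lo k d = lo k c)

def Q1 (M k m : ℕ) (c d : Fin (M + 1) → ℕ) : Prop :=
  tot d + 1 = tot c ∧ lo k d ≤ lo k c ∧ hi k d ≤ hi k c
    ∧ (m ≤ k + 1 → lo k d + 1 = lo k c)

lemma Q0_mono {M k m : ℕ} {c d : Fin (M + 1) → ℕ} (h : Q0 M k m c d) : Q0 M k (m + 1) c d := by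
  obtain ⟨h1, h2, h3, h4⟩ := h
  refine ⟨h1, h2, ?_, fun hle => h4 (by omega)⟩
  split_ifs at h3 ⊢ <;> omega

lemma Q1_mono {M k m : ℕ} {c d : Fin (M + 1) → ℕ} (h : Q1 M k m c d) : Q1 M k (m + 1) c d :=
  ⟨h.1, h.2.1, h.2.2.1, fun hle => h.2.2.2 (by omega)⟩

lemma step_dag {M k m : ℕ} {c d : Fin (M + 1) → ℕ} (j : Fin (M + 1)) (hj : (j : ℕ) = m)
    (hd : Q1 M k m c d) : Q0 M k (m + 1) c (Function.update d j (d j + 1)) := by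
  obtain ⟨h1, h2, h3, h4⟩ := hd
  have ht := tot_update d j (d j + 1)
  have hl := lo_update (k := k) d j (d j + 1)
  have hh := hi_update (k := k) d j (d j + 1)
  rw [hj] at hl hh
  refine ⟨?_, ?_, ?_, ?_⟩
  · omega
  · by_cases hmk : m ≤ k
    · have h4' := h4 (by omega)
      split_ifs at hl <;> omega
    · split_ifs at hl <;> omega
  · by_cases hkm : k ≤ m
    · split_ifs at hh ⊢ <;> omega
    · split_ifs at hh ⊢ <;> omega
  · intro hle
    have h4' := h4 (by omega)
    have hmk : m ≤ k := by omega
    split_ifs at hl <;> omega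

lemma step_phi {M k m : ℕ} {c d : Fin (M + 1) → ℕ} (j : Fin (M + 1)) (hj : (j : ℕ) = m)
    (h0 : d j ≠ 0) (hd : Q0 M k m c d) : Q1 M k (m + 1) c (Function.update d j (d j - 1)) := by
  obtain ⟨h1, h2, h3, h4⟩ := hd
  have ht := tot_update d j (d j - 1)
  have hl := lo_update (k := k) d j (d j - 1)
  have hh := hi_update (k := k) d j (d j - 1)
  rw [hj] at hl hh
  refine ⟨?_, ?_, ?_, ?_⟩
  · omega
  · split_ifs at hl <;> omega
  · by_cases hkm : k ≤ m
    · split_ifs at h3 hh <;> omega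
    · split_ifs at h3 hh <;> omega
  · intro hle
    have h4' := h4 (by omega)
    have hmk : m ≤ k := by omega
    split_ifs at hl <;> omega

lemma Tpart_mem {M : ℕ} (k : ℕ) (u : ℂ) :
    ∀ m, m ≤ M + 1 → ∀ (c : Fin (M + 1) → ℕ) (a : ℂ),
      Tpart M u m 0 0 (Finsupp.single c a) ∈ Supp M (Q0 M k m c) ∧
      Tpart M u m 1 0 (Finsupp.single c a) ∈ Supp M (Q1 M k m c) := by
  intro m
  induction m with
  | zero =>
    intro _ c a
    constructor
    · have h1 : Tpart M u 0 0 0 = 1 := Matrix.one_apply_eq 0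
      rw [h1, Module.End.one_apply]
      refine single_mem_Supp ⟨rfl, le_rfl, ?_, fun _ => rfl⟩ a
      simp
    · have h1 : Tpart M u 0 1 0 = 0 := Matrix.one_apply_ne (by decide)
      rw [h1, LinearMap.zero_apply]
      exact zero_mem _
  | succ m ih =>
    intro hm c a
    have hm' : m ≤ M + 1 := by omega
    have hmM : m < M + 1 := by omega
    set j : Fin (M + 1) := ⟨m, hmM⟩ with hjdef
    have hj : (j : ℕ) = m := rfl
    have hTp : Tpart M u (m + 1) = Lop M j u * Tpart M u m := by
      have : Tpart M u (m + 1)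
          = (if h : m < M + 1 then Lop M ⟨m, h⟩ u else 1) * Tpart M u m := rfl
      rw [this, dif_pos hmM]
    have e0 : Tpart M u (m + 1) 0 0
        = (u⁻¹ • 1) * Tpart M u m 0 0 + phiDagOp M j * Tpart M u m 1 0 := by
      rw [hTp, Matrix.mul_apply, Fin.sum_univ_two, Lop00, Lop01]
    have e1 : Tpart M u (m + 1) 1 0
        = phiOp M j * Tpart M u m 0 0 + (u • 1) * Tpart M u m 1 0 := by
      rw [hTp, Matrix.mul_apply, Fin.sum_univ_two, Lop10, Lop11]
    constructor
    · rw [e0, LinearMap.add_apply]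
      apply add_mem
      · rw [Module.End.mul_apply]
        have hx : (u⁻¹ • (1 : Module.End ℂ (FockM M))) (Tpart M u m 0 0 (Finsupp.single c a))
            = u⁻¹ • (Tpart M u m 0 0 (Finsupp.single c a)) := by
          simp
        rw [hx]
        exact Submodule.smul_mem _ _
          (Supp_mono (fun d hd => Q0_mono hd) ((ih hm' c a).1))
      · rw [Module.End.mul_apply]
        apply map_Supp (phiDagOp M j) (fun d hd => ?_) _ ((ih hm' c a).2)
        rw [phiDagOp_single]
        exact single_mem_Supp (step_dag j hj hd) 1
    · rw [e1, LinearMap.add_apply]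
      apply add_mem
      · rw [Module.End.mul_apply]
        apply map_Supp (phiOp M j) (fun d hd => ?_) _ ((ih hm' c a).1)
        rw [phiOp_single]
        by_cases h0 : d j = 0
        · rw [if_pos h0]; exact zero_mem _
        · rw [if_neg h0]
          exact single_mem_Supp (step_phi j hj h0 hd) 1
      · rw [Module.End.mul_apply]
        have hx : (u • (1 : Module.End ℂ (FockM M))) (Tpart M u m 1 0 (Finsupp.single c a))
            = u • (Tpart M u m 1 0 (Finsupp.single c a)) := by
          simp
        rw [hx]
        exact Submodule.smul_mem _ _
          (Supp_mono (fun d hd => Q1_mono hd) ((ih hm' c a).2))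

lemma Cop_mem {M : ℕ} (k : ℕ) (u : ℂ) (c : Fin (M + 1) → ℕ) (a : ℂ) :
    Cop M u (Finsupp.single c a)
      ∈ Supp M (fun d => tot d + 1 = tot c ∧ lo k d ≤ lo k c ∧ hi k d ≤ hi k c) := by
  have h := (Tpart_mem k u (M + 1) le_rfl c a).2
  rw [Cop, Tmon_eq_Tpart]
  exact Supp_mono (fun d hd => ⟨hd.1, hd.2.1, hd.2.2.1⟩) h

lemma Cprod_mem {M : ℕ} (k : ℕ) :
    ∀ (n : ℕ) (vs : Fin n → ℂ) (c : Fin (M + 1) → ℕ) (a : ℂ),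
      (List.ofFn fun i => Cop M (vs i)).prod (Finsupp.single c a)
        ∈ Supp M (fun d => tot d + n = tot c ∧ lo k d ≤ lo k c ∧ hi k d ≤ hi k c) := by
  intro n
  induction n with
  | zero =>
    intro vs c a
    rw [List.ofFn_zero, List.prod_nil, Module.End.one_apply]
    exact single_mem_Supp ⟨rfl, le_rfl, le_rfl⟩ a
  | succ n ih =>
    intro vs c a
    rw [List.ofFn_succ, List.prod_cons, Module.End.mul_apply]
    apply map_Supp _ (fun d hd => ?_) _ (ih (fun i => vs i.succ) c a)
    exact Supp_mono
      (fun e he => ⟨by omega, le_trans he.2.1 hd.2.1, le_trans he.2.2 hd.2.2⟩)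
      (Cop_mem k (vs 0) d 1)

/-! ### The conjugate vacuum composed with an annihilator -/

lemma covac_phi {M : ℕ} (j : Fin (M + 1)) :
    (covac M).comp (phiOp M j)
      = Finsupp.lapply (Function.update (fun _ => (0 : ℕ)) j 1) := by
  apply Finsupp.lhom_ext
  intro c a
  rw [LinearMap.comp_apply, phiOp_single, Finsupp.lapply_apply, Finsupp.single_apply]
  by_cases h0 : c j = 0
  · rw [if_pos h0, map_zero]
    have hne : ¬ (c = Function.update (fun _ => (0 : ℕ)) j 1) := by
      intro h
      rw [h, Function.update_self] at h0
      exact one_ne_zero h0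
    rw [if_neg hne]
  · rw [if_neg h0, covac, Finsupp.lapply_apply, Finsupp.single_apply]
    have hiff : (Function.update c j (c j - 1) = (fun _ => (0 : ℕ)))
        ↔ (c = Function.update (fun _ => (0 : ℕ)) j 1) := by
      constructor
      · intro h
        funext t
        by_cases ht : t = j
        · subst ht
          have h2 := congrFun h t
          rw [Function.update_self] at h2
          rw [Function.update_self]
          omega
        · have h2 := congrFun h t
          rw [Function.update_of_ne ht] at h2
          rw [Function.update_of_ne ht]
          exact h2
      · intro h
        funext t
        by_cases ht : t = j
        · subst ht
          rw [Function.update_self]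
          have h2 := congrFun h t
          rw [Function.update_self] at h2
          omega
        · rw [Function.update_of_ne ht]
          have h2 := congrFun h t
          rw [Function.update_of_ne ht] at h2
          exact h2
    by_cases hcc : c = Function.update (fun _ => (0 : ℕ)) j 1
    · rw [if_pos (hiff.mpr hcc), if_pos hcc]
    · rw [if_neg (fun hh => hcc (hiff.mp hh)), if_neg hcc]

/-! ### Combinatorics of partitions -/

lemma card_filter_lt {N t : ℕ} (ht : t ≤ N) :
    (Finset.univ.filter fun i : Fin N => (i : ℕ) < t).card = t := by
  have himg : (Finset.univ.filter fun i : Fin N => (i : ℕ) < t).image Fin.val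
      = Finset.range t := by
    ext x
    simp only [Finset.mem_image, Finset.mem_filter, Finset.mem_univ, true_and, Finset.mem_range]
    constructor
    · rintro ⟨i, hi, rfl⟩; exact hi
    · intro hx; exact ⟨⟨x, by omega⟩, hx, rfl⟩
  have h2 := Finset.card_image_of_injective
    (Finset.univ.filter fun i : Fin N => (i : ℕ) < t) Fin.val_injective
  rw [himg, Finset.card_range] at h2
  exact h2.symm

lemma count_ge {N M : ℕ} (lam : Fin N → Fin (M + 1)) (jn : ℕ) :
    (Finset.univ.filter fun i : Fin N => jn ≤ (lam i : ℕ)).card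
      = Fcnt (configOf M fun i => (lam i : ℕ)) jn := by
  classical
  rw [Fcnt]
  rw [Finset.card_eq_sum_card_fiberwise
    (f := lam) (s := Finset.univ.filter fun i : Fin N => jn ≤ (lam i : ℕ))
    (t := Finset.univ.filter fun t : Fin (M + 1) => jn ≤ (t : ℕ))
    (fun i hi => by
      simp only [Finset.mem_coe, Finset.mem_filter, Finset.mem_univ, true_and] at hi ⊢
      exact hi)]
  apply Finset.sum_congr rfl
  intro t ht
  simp only [Finset.mem_filter, Finset.mem_univ, true_and] at ht
  rw [configOf]
  congr 1
  ext i
  simp only [Finset.mem_filter, Finset.mem_univ, true_and]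
  constructor
  · rintro ⟨hle, rfl⟩
    rfl
  · intro hv
    have : lam i = t := Fin.ext hv
    exact ⟨by omega, this⟩

lemma antitone_char {N M : ℕ} {lam : Fin N → Fin (M + 1)} (hlam : Antitone lam) (jn : ℕ)
    (i : Fin N) :
    jn ≤ (lam i : ℕ)
      ↔ (i : ℕ) < (Finset.univ.filter fun i' : Fin N => jn ≤ (lam i' : ℕ)).card := by
  constructor
  · intro h
    have hsub : (Finset.univ.filter fun i' : Fin N => (i' : ℕ) < (i : ℕ) + 1)
        ⊆ Finset.univ.filter fun i' : Fin N => jn ≤ (lam i' : ℕ) := by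
      intro i' hi'
      simp only [Finset.mem_filter, Finset.mem_univ, true_and] at hi' ⊢
      have hle : i' ≤ i := by
        rw [Fin.le_def]; omega
      have := hlam hle
      rw [Fin.le_def] at this
      omega
    have hc := Finset.card_le_card hsub
    rw [card_filter_lt (by omega : (i : ℕ) + 1 ≤ N)] at hc
    omega
  · intro h
    by_contra hno
    have hsub : (Finset.univ.filter fun i' : Fin N => jn ≤ (lam i' : ℕ))
        ⊆ Finset.univ.filter fun i' : Fin N => (i' : ℕ) < (i : ℕ) := by
      intro i' hi'
      simp only [Finset.mem_filter, Finset.mem_univ, true_and] at hi' ⊢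
      by_contra hge
      have hle : i ≤ i' := by
        rw [Fin.le_def]; omega
      have := hlam hle
      rw [Fin.le_def] at this
      omega
    have hc := Finset.card_le_card hsub
    rw [card_filter_lt (by omega : (i : ℕ) ≤ N)] at hc
    omega

lemma Fcnt_ext {M : ℕ} {c c' : Fin (M + 1) → ℕ} (h : ∀ jn, Fcnt c jn = Fcnt c' jn) : c = c' := by
  funext j
  have h1 := Fcnt_succ c j
  have h2 := Fcnt_succ c' j
  have h3 := h (j : ℕ)
  have h4 := h ((j : ℕ) + 1)
  omega

lemma configOf_inj {N M : ℕ} {lam lam' : Fin N → Fin (M + 1)} (h : Antitone lam)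
    (h' : Antitone lam')
    (hc : configOf M (fun i => (lam i : ℕ)) = configOf M (fun i => (lam' i : ℕ))) :
    lam = lam' := by
  funext i
  have key : ∀ jn, jn ≤ (lam i : ℕ) ↔ jn ≤ (lam' i : ℕ) := by
    intro jn
    rw [antitone_char h jn i, antitone_char h' jn i, count_ge, count_ge, hc]
  have h1 := (key (lam i : ℕ)).mp le_rfl
  have h2 := (key (lam' i : ℕ)).mpr le_rfl
  exact Fin.ext (le_antisymm h1 h2)

lemma exists_lam {M N k : ℕ} (hN : 0 < N) (hk : k ≤ M) (c : Fin (M + 1) → ℕ)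
    (h1 : tot c = N) (h2 : 1 ≤ lo k c) (h3 : 1 ≤ hi k c) :
    ∃ lam : Fin N → Fin (M + 1), Antitone lam ∧ k ≤ (lam ⟨0, hN⟩ : ℕ)
      ∧ (lam ⟨N - 1, by omega⟩ : ℕ) ≤ k
      ∧ configOf M (fun i => (lam i : ℕ)) = c := by
  classical
  have hne : ∀ i : Fin N,
      (Finset.univ.filter fun j : Fin (M + 1) => (i : ℕ) < Fcnt c (j : ℕ)).Nonempty := by
    intro i
    refine ⟨0, ?_⟩
    simp only [Finset.mem_filter, Finset.mem_univ, true_and]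
    have hz : ((0 : Fin (M + 1)) : ℕ) = 0 := rfl
    rw [hz, Fcnt_zero, h1]
    exact i.isLt
  set lam : Fin N → Fin (M + 1) := fun i =>
    (Finset.univ.filter fun j : Fin (M + 1) => (i : ℕ) < Fcnt c (j : ℕ)).max' (hne i) with hlam
  have char : ∀ (i : Fin N) (jn : ℕ), jn ≤ (lam i : ℕ) ↔ (i : ℕ) < Fcnt c jn := by
    intro i jn
    constructor
    · intro hle
      have hmem : (i : ℕ) < Fcnt c (lam i : ℕ) := by
        have hx := Finset.max'_mem
          (Finset.univ.filter fun j : Fin (M + 1) => (i : ℕ) < Fcnt c (j : ℕ)) (hne i)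
        simp only [Finset.mem_filter, Finset.mem_univ, true_and] at hx
        exact hx
      have := Fcnt_anti c hle
      omega
    · intro hlt
      have hjnM : jn ≤ M := by
        by_contra hgt
        rw [Fcnt_top c (by omega)] at hlt
        omega
      have hmem : (⟨jn, by omega⟩ : Fin (M + 1))
          ∈ Finset.univ.filter fun j : Fin (M + 1) => (i : ℕ) < Fcnt c (j : ℕ) := by
        simp only [Finset.mem_filter, Finset.mem_univ, true_and]
        exact hlt
      exact Fin.le_def.mp (Finset.le_max' _ _ hmem)
  have hanti : Antitone lam := by
    intro i i' hii'
    have ha := (char i' (lam i' : ℕ)).mp le_rfl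
    have hb : (i : ℕ) < Fcnt c (lam i' : ℕ) := by
      have := Fin.le_def.mp hii'
      omega
    exact Fin.le_def.mpr ((char i (lam i' : ℕ)).mpr hb)
  refine ⟨lam, hanti, ?_, ?_, ?_⟩
  · apply (char _ k).mpr
    have hv : ((⟨0, hN⟩ : Fin N) : ℕ) = 0 := rfl
    rw [hv]
    have : hi k c = Fcnt c k := rfl
    omega
  · by_contra hgt
    push_neg at hgt
    have hch := (char ⟨N - 1, by omega⟩ (k + 1)).mp (by omega)
    have hlo := lo_add_Fcnt (k := k) c
    have hv : ((⟨N - 1, by omega⟩ : Fin N) : ℕ) = N - 1 := rfl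
    rw [hv] at hch
    omega
  · apply Fcnt_ext
    intro jn
    rw [← count_ge]
    have hset : (Finset.univ.filter fun i : Fin N => jn ≤ (lam i : ℕ))
        = Finset.univ.filter fun i : Fin N => (i : ℕ) < Fcnt c jn := by
      ext i
      simp only [Finset.mem_filter, Finset.mem_univ, true_and]
      exact char i jn
    rw [hset, card_filter_lt]
    have := Fcnt_anti c (Nat.zero_le jn)
    rw [Fcnt_zero, h1] at this
    exact this

end ConjAux

/-- The conjugate state vector `⟨0| φ_k C(v_2)⋯C(v_N)` expands
over exactly the partitions `λ` with `(k) ⊆ λ ⊆ (M^{N-1}, k)`, i.e. partitions with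
at most `N` parts, each part at most `M`, last part at most `k`, and first part at
least `k`. -/
theorem conjugate_state_vector_support (M N k : ℕ) (hN : 0 < N) (hk : k ≤ M)
    (v : Fin (N - 1) → ℂ) (hv : ∀ i, v i ≠ 0) :
    ∃ ψ : (Fin N → Fin (M + 1)) → ℂ,
      (covac M).comp
          (phiOp M ⟨k, by omega⟩ * (List.ofFn fun i : Fin (N - 1) => Cop M (v i)).prod) =
        ∑ lam ∈ Finset.univ.filter
            (fun lam : Fin N → Fin (M + 1) =>
              Antitone lam ∧ k ≤ (lam ⟨0, hN⟩ : ℕ) ∧ (lam ⟨N - 1, by omega⟩ : ℕ) ≤ k),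
          ψ lam • colam M (fun i => (lam i : ℕ)) := by
  classical
  open ConjAux in
  set jk : Fin (M + 1) := ⟨k, by omega⟩ with hjk
  set P : Module.End ℂ (FockM M) := (List.ofFn fun i : Fin (N - 1) => Cop M (v i)).prod with hP
  set Lf : FockM M →ₗ[ℂ] ℂ := (covac M).comp (phiOp M jk * P) with hLf
  set dlt : Fin (M + 1) → ℕ := Function.update (fun _ => (0 : ℕ)) jk 1 with hdlt
  have hjkv : (jk : ℕ) = k := rfl
  have hδ : ∀ (c : Fin (M + 1) → ℕ) (a : ℂ), Lf (Finsupp.single c a) = (P (Finsupp.single c a)) dlt := by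
    intro c a
    rw [hLf, LinearMap.comp_apply, Module.End.mul_apply]
    have := LinearMap.congr_fun (covac_phi jk) (P (Finsupp.single c a))
    rw [LinearMap.comp_apply] at this
    rw [this, Finsupp.lapply_apply]
  have hsupp : ∀ c : Fin (M + 1) → ℕ, Lf (Finsupp.single c 1) ≠ 0 →
      tot c = N ∧ 1 ≤ lo k c ∧ 1 ≤ hi k c := by
    intro c hne
    rw [hδ] at hne
    have hmem := Cprod_mem (M := M) k (N - 1) v c 1
    have hQ := mem_Supp.mp hmem dlt hne
    have hz : tot (fun _ => (0 : ℕ) : Fin (M + 1) → ℕ) = 0 := by simp [tot]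
    have hzl : lo k (fun _ => (0 : ℕ) : Fin (M + 1) → ℕ) = 0 := by simp [lo]
    have hzh : hi k (fun _ => (0 : ℕ) : Fin (M + 1) → ℕ) = 0 := by simp [hi, Fcnt]
    have hδt : tot dlt = 1 := by
      have h := tot_update (fun _ => (0 : ℕ) : Fin (M + 1) → ℕ) jk 1
      rw [← hdlt] at h
      simpa [hz] using h
    have hδl : lo k dlt = 1 := by
      have h := lo_update (k := k) (fun _ => (0 : ℕ) : Fin (M + 1) → ℕ) jk 1
      rw [← hdlt] at h
      simpa [hzl, hjkv] using h
    have hδh : hi k dlt = 1 := by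
      have h := hi_update (k := k) (fun _ => (0 : ℕ) : Fin (M + 1) → ℕ) jk 1
      rw [← hdlt] at h
      simpa [hzh, hjkv] using h
    obtain ⟨hq1, hq2, hq3⟩ := hQ
    refine ⟨by omega, by omega, by omega⟩
  refine ⟨fun lam => Lf (Finsupp.single (configOf M fun i => (lam i : ℕ)) 1), ?_⟩
  apply Finsupp.lhom_ext
  intro c a
  simp only [LinearMap.sum_apply, LinearMap.smul_apply, colam, Finsupp.lapply_apply,
    Finsupp.single_apply, smul_eq_mul]
  have hsa : Lf (Finsupp.single c a) = a * Lf (Finsupp.single c 1) := by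
    have h1 : Finsupp.single c a = a • Finsupp.single c 1 := by
      rw [Finsupp.smul_single, smul_eq_mul, mul_one]
    rw [h1, map_smul, smul_eq_mul]
  by_cases hex : ∃ lam₀, lam₀ ∈ (Finset.univ.filter
      (fun lam : Fin N → Fin (M + 1) =>
        Antitone lam ∧ k ≤ (lam ⟨0, hN⟩ : ℕ) ∧ (lam ⟨N - 1, by omega⟩ : ℕ) ≤ k)) ∧
      configOf M (fun i => ((lam₀ i : ℕ))) = c
  · obtain ⟨lam₀, hlam₀s, hlam₀c⟩ := hex
    rw [Finset.sum_eq_single lam₀]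
    · rw [if_pos hlam₀c.symm, hlam₀c, hsa, mul_comm]
    · intro lam hlams hne
      have hcne : ¬ (c = configOf M fun i => (lam i : ℕ)) := by
        intro heq
        apply hne
        have ha : Antitone lam := (Finset.mem_filter.mp hlams).2.1
        have ha₀ : Antitone lam₀ := (Finset.mem_filter.mp hlam₀s).2.1
        exact configOf_inj ha ha₀ (by rw [← heq, hlam₀c])
      rw [if_neg hcne, mul_zero]
    · intro habs
      exact absurd hlam₀s habs
  · have h0 : Lf (Finsupp.single c 1) = 0 := by
      by_contra hne
      obtain ⟨ht, hl, hh⟩ := hsupp c hne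
      obtain ⟨lam, ha, hf, hlst, hcfg⟩ := exists_lam hN hk c ht hl hh
      exact hex ⟨lam, Finset.mem_filter.mpr ⟨Finset.mem_univ _, ha, hf, hlst⟩, hcfg⟩
    rw [hsa, h0, mul_zero]
    symm
    apply Finset.sum_eq_zero
    intro lam hlams
    have hcne : ¬ (c = configOf M fun i => (lam i : ℕ)) := fun heq =>
      hex ⟨lam, hlams, heq.symm⟩
    rw [if_neg hcne, mul_zero]
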